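/- For λ1, λ2 ∉ ℤ_{≤0} with λ1+λ2 ∉ ℤ_{≤0} and ℓ ∈ ℕ, the map Φ̃_ℓ^{λ1,λ2}: Pol(t) → Pol(x,y) defined by Φ̃_ℓ Q(x,y) = (x+y)^ℓ P_ℓ^{(λ1-1,λ2-1)}((y-x)/(x+y)) Q(x+y) intertwines the lowest weight module π*_{λ1+λ2+2ℓ} with the tensor product π*_{λ1} ⊗ π*_{λ2}: for Z ∈ {H, E, F}, Φ̃_ℓ ∘ π*_{λ1+λ2+2ℓ}(Z) = (π*_{λ1} ⊗ π*_{λ2})(Z) ∘ Φ̃_ℓ. -/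

import Mathlib

open MvPolynomial Finset

/-- Generalized binomial coefficient `C(a, m) = (a-m+1)_m / m!`. -/
noncomputable def gbinom (a : ℂ) (m : ℕ) : ℂ :=
  (ascPochhammer ℂ m).eval (a - m + 1) / m.factorial

/-- Lowest weight module `π*_λ(H) P = λP + 2xP'` on `Pol(x)`. -/
noncomputable def sH (l : ℂ) (P : Polynomial ℂ) : Polynomial ℂ :=
  l • P + (2 : ℂ) • (Polynomial.X * Polynomial.derivative P)

/-- `π*_λ(E) P = xP`. -/
noncomputable def sE (P : Polynomial ℂ) : Polynomial ℂ := Polynomial.X * P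

/-- `π*_λ(F) P = -(xP'' + λP')`. -/
noncomputable def sF (l : ℂ) (P : Polynomial ℂ) : Polynomial ℂ :=
  -(Polynomial.X * Polynomial.derivative (Polynomial.derivative P)
      + l • Polynomial.derivative P)

/-- `(π*_{λ1} ⊗ π*_{λ2})(H) P = (λ1+λ2)P + 2(x∂_x + y∂_y)P` on `Pol(x,y)`. -/
noncomputable def tH (l1 l2 : ℂ) (P : MvPolynomial (Fin 2) ℂ) : MvPolynomial (Fin 2) ℂ :=
  (l1 + l2) • P + (2 : ℂ) • (X 0 * pderiv 0 P + X 1 * pderiv 1 P)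

/-- `(π*_{λ1} ⊗ π*_{λ2})(E) P = (x+y)P`. -/
noncomputable def tE (P : MvPolynomial (Fin 2) ℂ) : MvPolynomial (Fin 2) ℂ :=
  (X 0 + X 1) * P

/-- `(π*_{λ1} ⊗ π*_{λ2})(F) P = -((x∂_x² + y∂_y²)P + λ1∂_xP + λ2∂_yP)`. -/
noncomputable def tF (l1 l2 : ℂ) (P : MvPolynomial (Fin 2) ℂ) : MvPolynomial (Fin 2) ℂ :=
  -(X 0 * pderiv 0 (pderiv 0 P) + X 1 * pderiv 1 (pderiv 1 P))
    - l1 • pderiv 0 P - l2 • pderiv 1 P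

/-- The map `Φ̃_ℓ^{λ1,λ2} Q(x,y) = (x+y)^ℓ P_ℓ^{(λ1-1,λ2-1)}((y-x)/(x+y)) Q(x+y)`, written
as a polynomial: `(Σ_s (-1)^s C(ℓ+λ1-1,ℓ-s) C(ℓ+λ2-1,s) x^s y^{ℓ-s}) · Q(x+y)`. -/
noncomputable def intertwiner (l1 l2 : ℂ) (l : ℕ) (Q : Polynomial ℂ) :
    MvPolynomial (Fin 2) ℂ :=
  (∑ s ∈ Finset.range (l + 1),
      ((-1 : ℂ) ^ s * gbinom ((l : ℂ) + l1 - 1) (l - s) * gbinom ((l : ℂ) + l2 - 1) s) •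
        (X 0 ^ s * X 1 ^ (l - s))) *
    Polynomial.aeval (X 0 + X 1) Q

lemma gbinom_succ (a : ℂ) (m : ℕ) :
    ((m : ℂ) + 1) * gbinom a (m + 1) = (a - m) * gbinom a m := by
  unfold gbinom
  have h : (ascPochhammer ℂ (m + 1)).eval (a - (m + 1 : ℕ) + 1)
      = (a - m) * (ascPochhammer ℂ m).eval (a - m + 1) := by
    rw [ascPochhammer_succ_left, Polynomial.eval_mul, Polynomial.eval_comp]
    simp only [Polynomial.eval_X, Polynomial.eval_add, Polynomial.eval_one]
    push_cast
    ring_nf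
  rw [h]
  have hm : ((m + 1).factorial : ℂ) = ((m : ℂ) + 1) * m.factorial := by
    push_cast [Nat.factorial_succ]; ring
  have h0 : (m.factorial : ℂ) ≠ 0 := by
    exact_mod_cast Nat.factorial_ne_zero m
  have h1 : ((m : ℂ) + 1) ≠ 0 := Nat.cast_add_one_ne_zero m
  rw [hm]
  field_simp

lemma pd0 (s t : ℕ) : pderiv 0 ((X 0 : MvPolynomial (Fin 2) ℂ) ^ s * X 1 ^ t)
    = (s : ℂ) • (X 0 ^ (s - 1) * X 1 ^ t) := by
  rw [pderiv_mul, pderiv_pow, pderiv_pow, pderiv_X_self, pderiv_X_of_ne (by decide)]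
  simp [smul_eq_C_mul]
  ring

lemma pd1 (s t : ℕ) : pderiv 1 ((X 0 : MvPolynomial (Fin 2) ℂ) ^ s * X 1 ^ t)
    = (t : ℂ) • (X 0 ^ s * X 1 ^ (t - 1)) := by
  rw [pderiv_mul, pderiv_pow, pderiv_pow, pderiv_X_self, pderiv_X_of_ne (by decide)]
  simp [smul_eq_C_mul]
  ring

lemma Xmul0 (s t : ℕ) : (s : ℂ) • ((X 0 : MvPolynomial (Fin 2) ℂ) * (X 0 ^ (s - 1) * X 1 ^ t))
    = (s : ℂ) • (X 0 ^ s * X 1 ^ t) := by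
  cases s with
  | zero => simp
  | succ n => rw [smul_eq_C_mul, smul_eq_C_mul]; ring_nf; rw [Nat.add_sub_cancel_left]

lemma Xmul1 (s t : ℕ) : (t : ℂ) • ((X 1 : MvPolynomial (Fin 2) ℂ) * (X 0 ^ s * X 1 ^ (t - 1)))
    = (t : ℂ) • (X 0 ^ s * X 1 ^ t) := by
  cases t with
  | zero => simp
  | succ n => rw [smul_eq_C_mul, smul_eq_C_mul]; ring_nf; rw [Nat.add_sub_cancel_left]

lemma pderiv_aeval_S (i : Fin 2) (Q : Polynomial ℂ) :
    pderiv i (Polynomial.aeval (X 0 + X 1 : MvPolynomial (Fin 2) ℂ) Q)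
      = Polynomial.aeval (X 0 + X 1 : MvPolynomial (Fin 2) ℂ) Q.derivative := by
  have hS : pderiv i (X 0 + X 1 : MvPolynomial (Fin 2) ℂ) = 1 := by
    fin_cases i <;>
      simp [pderiv_X_self, pderiv_X_of_ne (show (0:Fin 2) ≠ 1 by decide),
        pderiv_X_of_ne (show (1:Fin 2) ≠ 0 by decide)]
  induction Q using Polynomial.induction_on' with
  | add p q hp hq => simp [hp, hq]
  | monomial n a =>
    rw [Polynomial.aeval_monomial, Polynomial.derivative_monomial, Polynomial.aeval_monomial]
    rw [pderiv_mul, pderiv_pow, hS]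
    simp [algebraMap_eq, pderiv_C, smul_eq_C_mul]
    ring

noncomputable def jc (l1 l2 : ℂ) (l : ℕ) (s : ℕ) : ℂ :=
  (-1 : ℂ) ^ s * gbinom ((l : ℂ) + l1 - 1) (l - s) * gbinom ((l : ℂ) + l2 - 1) s

noncomputable def KK (l1 l2 : ℂ) (l : ℕ) : MvPolynomial (Fin 2) ℂ :=
  ∑ s ∈ Finset.range (l + 1), jc l1 l2 l s • (X 0 ^ s * X 1 ^ (l - s))

lemma euler (l1 l2 : ℂ) (l : ℕ) :
    X 0 * pderiv 0 (KK l1 l2 l) + X 1 * pderiv 1 (KK l1 l2 l) = (l : ℂ) • KK l1 l2 l := by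
  unfold KK
  rw [map_sum, map_sum, Finset.mul_sum, Finset.mul_sum, Finset.smul_sum,
    ← Finset.sum_add_distrib]
  refine Finset.sum_congr rfl fun s hs => ?_
  have hsl : s ≤ l := by simpa [Nat.lt_succ_iff] using hs
  rw [Derivation.map_smul, Derivation.map_smul, pd0, pd1, mul_smul_comm, mul_smul_comm, mul_smul_comm, mul_smul_comm, Xmul0, Xmul1]
  rw [smul_smul, smul_smul, smul_smul, ← add_smul]
  congr 1
  have : ((l - s : ℕ) : ℂ) = (l : ℂ) - s := by
    push_cast [Nat.cast_sub hsl]; ring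
  rw [this]; ring

lemma jc_rec (l1 l2 : ℂ) (l s : ℕ) (hs : s + 1 ≤ l) :
    ((s : ℂ) + 1) * ((s : ℂ) + l1) * jc l1 l2 l (s + 1)
      + ((l - s : ℕ) : ℂ) * (((l - s - 1 : ℕ) : ℂ) + l2) * jc l1 l2 l s = 0 := by
  unfold jc
  set a1 : ℂ := (l : ℂ) + l1 - 1 with ha1
  set a2 : ℂ := (l : ℂ) + l2 - 1 with ha2
  have e0 : l - (s + 1) = l - s - 1 := by omega
  rw [e0]
  have hc1 : ((l - s : ℕ) : ℂ) = (l : ℂ) - s := Nat.cast_sub (by omega)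
  have hc2 : ((l - s - 1 : ℕ) : ℂ) = (l : ℂ) - s - 1 := by
    rw [show l - s - 1 = l - (s + 1) from by omega, Nat.cast_sub hs]; push_cast; ring
  have G2 := gbinom_succ a2 s
  have G1 : (((l - s - 1 : ℕ) : ℂ) + 1) * gbinom a1 (l - s)
      = (a1 - ((l - s - 1 : ℕ) : ℂ)) * gbinom a1 (l - s - 1) := by
    have h := gbinom_succ a1 (l - s - 1)
    rwa [show l - s - 1 + 1 = l - s from by omega] at h
  rw [hc2] at G1
  rw [hc1, hc2]
  linear_combination ((-1 : ℂ) ^ (s + 1) * ((s : ℂ) + l1) * gbinom a1 (l - s - 1)) * G2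
    + ((-1 : ℂ) ^ s * (a2 - (s : ℂ)) * gbinom a2 s) * G1

noncomputable def FF (l1 l2 : ℂ) (l s : ℕ) : MvPolynomial (Fin 2) ℂ :=
  ((s : ℂ) * (((s - 1 : ℕ) : ℂ) + l1) * jc l1 l2 l s) • (X 0 ^ (s - 1) * X 1 ^ (l - s))

noncomputable def GG (l1 l2 : ℂ) (l s : ℕ) : MvPolynomial (Fin 2) ℂ :=
  (((l - s : ℕ) : ℂ) * (((l - s - 1 : ℕ) : ℂ) + l2) * jc l1 l2 l s) • (X 0 ^ s * X 1 ^ (l - s - 1))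

lemma jacobi (l1 l2 : ℂ) (l : ℕ) :
    X 0 * pderiv 0 (pderiv 0 (KK l1 l2 l)) + X 1 * pderiv 1 (pderiv 1 (KK l1 l2 l))
      + l1 • pderiv 0 (KK l1 l2 l) + l2 • pderiv 1 (KK l1 l2 l) = 0 := by
  have step : X 0 * pderiv 0 (pderiv 0 (KK l1 l2 l)) + X 1 * pderiv 1 (pderiv 1 (KK l1 l2 l))
      + l1 • pderiv 0 (KK l1 l2 l) + l2 • pderiv 1 (KK l1 l2 l)
      = ∑ s ∈ Finset.range (l + 1), (FF l1 l2 l s + GG l1 l2 l s) := by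
    unfold KK
    simp only [map_sum, Derivation.map_smul, pd0, pd1, Finset.mul_sum, Finset.smul_sum,
      ← Finset.sum_add_distrib]
    refine Finset.sum_congr rfl fun s _ => ?_
    unfold FF GG
    rw [mul_smul_comm, mul_smul_comm, mul_smul_comm, mul_smul_comm, mul_smul_comm, mul_smul_comm,
      Xmul0, Xmul1]
    rw [smul_smul, smul_smul, smul_smul, smul_smul, smul_smul, smul_smul, smul_smul, smul_smul]
    rw [show ∀ a b c d : MvPolynomial (Fin 2) ℂ, a + b + c + d = (a + c) + (b + d) from
      fun a b c d => by ring]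
    rw [← add_smul, ← add_smul]
    congr 2 <;> ring
  rw [step, Finset.sum_add_distrib]
  have hF : ∑ s ∈ Finset.range (l + 1), FF l1 l2 l s
      = ∑ s ∈ Finset.range l, FF l1 l2 l (s + 1) := by
    rw [Finset.sum_range_succ']
    simp [FF]
  have hG : ∑ s ∈ Finset.range (l + 1), GG l1 l2 l s
      = ∑ s ∈ Finset.range l, GG l1 l2 l s := by
    rw [Finset.sum_range_succ]
    simp [GG]
  rw [hF, hG, ← Finset.sum_add_distrib]
  refine Finset.sum_eq_zero fun s hs => ?_
  have hsl : s + 1 ≤ l := Finset.mem_range.mp hs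
  unfold FF GG
  rw [show s + 1 - 1 = s from rfl, show l - (s + 1) = l - s - 1 from by omega, ← add_smul]
  have := jc_rec l1 l2 l s hsl
  have hcoef : ((s + 1 : ℕ) : ℂ) * (((s : ℕ) : ℂ) + l1) * jc l1 l2 l (s + 1)
      + ((l - s : ℕ) : ℂ) * (((l - s - 1 : ℕ) : ℂ) + l2) * jc l1 l2 l s = 0 := by
    push_cast
    linear_combination this
  rw [hcoef, zero_smul]


/-- `Φ̃_ℓ^{λ1,λ2}` intertwines `π*_{λ1+λ2+2ℓ}` with `π*_{λ1} ⊗ π*_{λ2}`. -/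
theorem intertwiner_equivariant (l1 l2 : ℂ)
    (h1 : ∀ m : ℕ, l1 ≠ -(m : ℂ)) (h2 : ∀ m : ℕ, l2 ≠ -(m : ℂ))
    (h12 : ∀ m : ℕ, l1 + l2 ≠ -(m : ℂ)) (l : ℕ) (Q : Polynomial ℂ) :
    intertwiner l1 l2 l (sH (l1 + l2 + 2 * l) Q) = tH l1 l2 (intertwiner l1 l2 l Q) ∧
    intertwiner l1 l2 l (sE Q) = tE (intertwiner l1 l2 l Q) ∧
    intertwiner l1 l2 l (sF (l1 + l2 + 2 * l) Q) = tF l1 l2 (intertwiner l1 l2 l Q) := by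
  have hI : ∀ R : Polynomial ℂ, intertwiner l1 l2 l R
      = KK l1 l2 l * Polynomial.aeval (X 0 + X 1 : MvPolynomial (Fin 2) ℂ) R := fun R => rfl
  set K := KK l1 l2 l with hKdef
  have hE' : X 0 * pderiv 0 K + X 1 * pderiv 1 K = C (l : ℂ) * K := by
    rw [← smul_eq_C_mul]; exact euler l1 l2 l
  have hJ' : X 0 * pderiv 0 (pderiv 0 K) + X 1 * pderiv 1 (pderiv 1 K)
      + C l1 * pderiv 0 K + C l2 * pderiv 1 K = 0 := by
    rw [← smul_eq_C_mul, ← smul_eq_C_mul]; exact jacobi l1 l2 l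
  refine ⟨?_, ?_, ?_⟩
  · rw [hI, hI]
    unfold sH tH
    simp only [map_add, map_smul, map_mul, Polynomial.aeval_X, pderiv_mul, pderiv_aeval_S,
      smul_eq_C_mul, map_ofNat, C_add, C_mul]
    linear_combination (-(2 : MvPolynomial (Fin 2) ℂ)
      * Polynomial.aeval (X 0 + X 1 : MvPolynomial (Fin 2) ℂ) Q) * hE'
  · rw [hI, hI]
    unfold sE tE
    simp only [map_mul, Polynomial.aeval_X]
    ring
  · rw [hI, hI]
    unfold sF tF
    simp only [map_neg, map_add, map_smul, map_mul, Polynomial.aeval_X, pderiv_mul,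
      pderiv_aeval_S, smul_eq_C_mul, map_ofNat, C_add, C_mul]
    linear_combination (Polynomial.aeval (X 0 + X 1 : MvPolynomial (Fin 2) ℂ) Q) * hJ'
      + ((2 : MvPolynomial (Fin 2) ℂ)
        * Polynomial.aeval (X 0 + X 1 : MvPolynomial (Fin 2) ℂ) Q.derivative) * hE'
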